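/- Let n ≥ 3, let W be a weight with w_{i,j} > 0 for all 1 ≤ i < j ≤ n, and let π, φ ∈ S_n be distinct permutations with d_W(π,φ) < 1 (i.e., π and φ are nondiametrical, the diameter of (S_n,d_W) being 1). Then the set {π, φ, π̂, φ̂} forms a pseudolinear quadruple in (S_n,d_W); explicitly, d_W(π,φ) = d_W(π̂,φ̂) = s and d_W(φ,π̂) = d_W(φ̂,π) = t with s, t > 0, and d_W(π,π̂) = d_W(φ,φ̂) = s + t = 1. -/

import Mathlib

open Finset

/-- The set of index pairs `(i,j)` with `i < j`. -/
def pairs (n : ℕ) : Finset (Fin n × Fin n) :=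
  Finset.univ.filter (fun p => p.1 < p.2)

/-- The discordance set of two permutations: all pairs `i < j` with
`(π_j - π_i)(φ_j - φ_i) < 0`. -/
def dsc (n : ℕ) (π φ : Equiv.Perm (Fin n)) : Finset (Fin n × Fin n) :=
  (pairs n).filter (fun p =>
    ((π p.2 : ℤ) - (π p.1 : ℤ)) * ((φ p.2 : ℤ) - (φ p.1 : ℤ)) < 0)

/-- `W` is a weight: a strictly upper triangular matrix of nonnegative reals
with positive total sum. -/
def IsWeight (n : ℕ) (W : Fin n → Fin n → ℝ) : Prop :=
  (∀ i j : Fin n, ¬ i < j → W i j = 0) ∧ (∀ i j : Fin n, 0 ≤ W i j) ∧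
    0 < ∑ p ∈ pairs n, W p.1 p.2

/-- The weighted Kendall tau distance. -/
noncomputable def dW (n : ℕ) (W : Fin n → Fin n → ℝ) (π φ : Equiv.Perm (Fin n)) : ℝ :=
  (∑ p ∈ dsc n π φ, W p.1 p.2) / (∑ p ∈ pairs n, W p.1 p.2)

/-- The ordinal inverse `π̂ = (n+1-π_1, …, n+1-π_n)` (in 0-indexed form,
`π̂ i = (n-1) - π i`). -/
def ordInv (n : ℕ) (π : Equiv.Perm (Fin n)) : Equiv.Perm (Fin n) :=
  π.trans Fin.revPerm

section Aux

variable {n : ℕ}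

lemma rev_cast (a : Fin n) : ((Fin.rev a : Fin n) : ℤ) = (n : ℤ) - 1 - (a : ℤ) := by
  have h := a.is_lt
  have h2 : (Fin.rev a : ℕ) = n - 1 - (a : ℕ) := by rw [Fin.val_rev]; omega
  omega

lemma val_sub_ne (π : Equiv.Perm (Fin n)) {i j : Fin n} (h : i ≠ j) :
    (π j : ℤ) - (π i : ℤ) ≠ 0 := by
  intro hc
  apply h
  apply π.injective
  have : (π i : ℤ) = (π j : ℤ) := by omega
  exact Fin.ext (by exact_mod_cast this)

lemma mem_pairs {p : Fin n × Fin n} : p ∈ pairs n ↔ p.1 < p.2 := by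
  simp [pairs]

lemma dsc_comm (π φ : Equiv.Perm (Fin n)) : dsc n π φ = dsc n φ π := by
  ext p
  simp only [dsc, Finset.mem_filter]
  rw [mul_comm]

lemma dsc_self_ordInv (π : Equiv.Perm (Fin n)) : dsc n π (ordInv n π) = pairs n := by
  ext p
  simp only [dsc, ordInv, Finset.mem_filter, Equiv.trans_apply, Fin.revPerm_apply,
    and_iff_left_iff_imp]
  intro hp
  have h1 := rev_cast (π p.1)
  have h2 := rev_cast (π p.2)
  have h3 := val_sub_ne π (mem_pairs.1 hp).ne
  nlinarith [mul_self_pos.mpr h3]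

lemma dsc_ordInv_ordInv (π φ : Equiv.Perm (Fin n)) :
    dsc n (ordInv n π) (ordInv n φ) = dsc n π φ := by
  ext p
  simp only [dsc, ordInv, Finset.mem_filter, Equiv.trans_apply, Fin.revPerm_apply]
  rw [rev_cast (π p.2), rev_cast (π p.1), rev_cast (φ p.2), rev_cast (φ p.1)]
  constructor <;> rintro ⟨h1, h2⟩ <;> exact ⟨h1, by nlinarith⟩

lemma dsc_right_ordInv (π φ : Equiv.Perm (Fin n)) :
    dsc n φ (ordInv n π) = pairs n \ dsc n π φ := by
  ext p
  simp only [dsc, ordInv, Finset.mem_sdiff, Finset.mem_filter, Equiv.trans_apply,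
    Fin.revPerm_apply]
  rw [rev_cast (π p.2), rev_cast (π p.1)]
  constructor
  · rintro ⟨h1, h2⟩
    exact ⟨h1, fun h => absurd h.2 (by nlinarith)⟩
  · rintro ⟨h1, h2⟩
    refine ⟨h1, ?_⟩
    have h3 := val_sub_ne π (mem_pairs.1 h1).ne
    have h4 := val_sub_ne φ (mem_pairs.1 h1).ne
    have h5 : ¬ ((π p.2 : ℤ) - (π p.1 : ℤ)) * ((φ p.2 : ℤ) - (φ p.1 : ℤ)) < 0 :=
      fun h => h2 ⟨h1, h⟩
    push_neg at h5
    have h6 : 0 < ((π p.2 : ℤ) - (π p.1 : ℤ)) * ((φ p.2 : ℤ) - (φ p.1 : ℤ)) :=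
      h5.lt_of_ne (Ne.symm (mul_ne_zero h3 h4))
    nlinarith

lemma dsc_ordInv_left (π φ : Equiv.Perm (Fin n)) :
    dsc n (ordInv n φ) π = pairs n \ dsc n π φ := by
  rw [dsc_comm, dsc_right_ordInv, dsc_comm]

lemma eq_of_dsc_empty (π φ : Equiv.Perm (Fin n)) (h : dsc n π φ = ∅) : π = φ := by
  haveI inst : WellFoundedLT (Fin n) := inferInstance
  have hord : ∀ i j : Fin n, i ≠ j →
      0 < ((π j : ℤ) - (π i : ℤ)) * ((φ j : ℤ) - (φ i : ℤ)) := by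
    intro i j hij
    have key : ∀ a b : Fin n, a < b →
        0 < ((π b : ℤ) - (π a : ℤ)) * ((φ b : ℤ) - (φ a : ℤ)) := by
      intro a b hab
      have hmem : (a, b) ∉ dsc n π φ := by rw [h]; exact Finset.notMem_empty _
      simp only [dsc, Finset.mem_filter, mem_pairs, not_and, not_lt] at hmem
      have h1 := hmem hab
      exact h1.lt_of_ne (Ne.symm (mul_ne_zero (val_sub_ne π hab.ne) (val_sub_ne φ hab.ne)))
    rcases lt_or_gt_of_ne hij with hlt | hgt
    · exact key i j hlt
    · have := key j i hgt
      nlinarith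
  have hsm : StrictMono ((π.symm.trans φ : Equiv.Perm (Fin n)) : Fin n → Fin n) := by
    intro a b hab
    have hij : π.symm a ≠ π.symm b := fun hc => hab.ne (by simpa using congrArg π hc)
    have hkey := hord (π.symm a) (π.symm b) hij
    have ha : π (π.symm a) = a := π.apply_symm_apply a
    have hb : π (π.symm b) = b := π.apply_symm_apply b
    have hab' : ((π (π.symm a) : Fin n) : ℤ) < ((π (π.symm b) : Fin n) : ℤ) := by
      rw [ha, hb]; exact_mod_cast hab
    have hres : ((φ (π.symm a) : Fin n) : ℤ) < ((φ (π.symm b) : Fin n) : ℤ) := by nlinarith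
    simp only [Equiv.trans_apply]
    exact_mod_cast hres
  have hid : ((π.symm.trans φ : Equiv.Perm (Fin n)) : Fin n → Fin n) = id := by
    refine (@StrictMono.range_inj (Fin n) (Fin n) _ _ inst _ id hsm strictMono_id).1 ?_
    simp [Set.range_eq_univ.2 (π.symm.trans φ).surjective]
  ext x
  have := congrFun hid (π x)
  simp only [Equiv.trans_apply, Equiv.symm_apply_apply, id_eq] at this
  exact congrArg Fin.val this.symm

end Aux

/-- Let `n ≥ 3`, let `W` be a weight with positive entries above the diagonal,
and let `π ≠ φ` be nondiametrical points of `(S_n, d_W)` (i.e. `d_W(π,φ) < 1`,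
the diameter being `1`). Then `{π, φ, π̂, φ̂}` forms a pseudolinear quadruple:
`d_W(π,φ) = d_W(π̂,φ̂) = s`, `d_W(φ,π̂) = d_W(φ̂,π) = t` with `s, t > 0`, and
`d_W(π,π̂) = d_W(φ,φ̂) = s + t = 1`. -/
theorem ordInv_pseudolinear_quadruple (n : ℕ) (hn : 3 ≤ n)
    (W : Fin n → Fin n → ℝ) (hW : IsWeight n W)
    (hpos : ∀ i j : Fin n, i < j → 0 < W i j)
    (π φ : Equiv.Perm (Fin n)) (hne : π ≠ φ) (hnd : dW n W π φ < 1) :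
    ∃ s t : ℝ, 0 < s ∧ 0 < t ∧
      dW n W π φ = s ∧ dW n W (ordInv n π) (ordInv n φ) = s ∧
      dW n W φ (ordInv n π) = t ∧ dW n W (ordInv n φ) π = t ∧
      dW n W π (ordInv n π) = s + t ∧ dW n W φ (ordInv n φ) = s + t ∧
      s + t = 1 := by
  obtain ⟨hupper, hnn, htot⟩ := hW
  set tot : ℝ := ∑ p ∈ pairs n, W p.1 p.2 with htoteq
  set S : Finset (Fin n × Fin n) := dsc n π φ with hS
  have hSsub : S ⊆ pairs n := Finset.filter_subset _ _
  set sS : ℝ := ∑ p ∈ S, W p.1 p.2 with hsS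
  have hsdiff : ∑ p ∈ pairs n \ S, W p.1 p.2 = tot - sS := by
    have := Finset.sum_sdiff (f := fun p : Fin n × Fin n => W p.1 p.2) hSsub
    linarith
  have hSne : S.Nonempty := by
    rcases Finset.eq_empty_or_nonempty S with he | hne'
    · exact absurd (eq_of_dsc_empty π φ he) hne
    · exact hne'
  have hsSpos : 0 < sS := by
    refine Finset.sum_pos (fun p hp => ?_) hSne
    exact hpos p.1 p.2 (mem_pairs.1 (hSsub hp))
  have hlt : sS < tot := by
    have : sS / tot < 1 := hnd
    exact (div_lt_one htot).1 this
  refine ⟨sS / tot, (tot - sS) / tot, div_pos hsSpos htot, div_pos (by linarith) htot,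
    rfl, ?_, ?_, ?_, ?_, ?_, ?_⟩
  · rw [dW, dsc_ordInv_ordInv]
  · rw [dW, dsc_right_ordInv, hsdiff]
  · rw [dW, dsc_ordInv_left, hsdiff]
  · rw [dW, dsc_self_ordInv, ← add_div]
    rw [show sS + (tot - sS) = tot by ring]
  · rw [dW, dsc_self_ordInv, ← add_div]
    rw [show sS + (tot - sS) = tot by ring]
  · rw [← add_div, show sS + (tot - sS) = tot by ring, div_self htot.ne']
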